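/- Fix i = (i₁, i₂) with i₁, i₂ ∈ ℤ \ {0}. Suppose b : ℤ² \ {0} → ℂ satisfies 2·det(n;m)·b(m+n) = det(n+i; m)·b(n) and det(n+i; m)·b(n) = det(n; m+i)·b(m) for all nonzero m, n with m+n ≠ 0, where det(p;q) = p₁q₂ − p₂q₁. Then b ≡ 0. -/

import Mathlib

/-- odd coefficient equations for degree `i = (i₁,i₂)` off the axes.
With `det(p;q) = p₁q₂ − p₂q₁`, if `b : ℤ² \ {0} → ℂ` satisfies
`2·det(n;m)·b(m+n) = det(n+i;m)·b(n)` and `det(n+i;m)·b(n) = det(n;m+i)·b(m)`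
for all nonzero `m, n` with `m+n ≠ 0`, then `b ≡ 0`. -/
theorem stmt9 (i : ℤ × ℤ) (hi1 : i.1 ≠ 0) (hi2 : i.2 ≠ 0) (b : ℤ × ℤ → ℂ)
    (h1 : ∀ m n : ℤ × ℤ, m ≠ 0 → n ≠ 0 → m + n ≠ 0 →
      2 * ((n.1 * m.2 - n.2 * m.1 : ℤ) : ℂ) * b (m + n) =
        (((n + i).1 * m.2 - (n + i).2 * m.1 : ℤ) : ℂ) * b n)
    (h2 : ∀ m n : ℤ × ℤ, m ≠ 0 → n ≠ 0 → m + n ≠ 0 →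
      (((n + i).1 * m.2 - (n + i).2 * m.1 : ℤ) : ℂ) * b n =
        ((n.1 * (m + i).2 - n.2 * (m + i).1 : ℤ) : ℂ) * b m) :
    ∀ m : ℤ × ℤ, m ≠ 0 → b m = 0 := by
  -- Step 1: nonparallel vectors have b = 0
  have key : ∀ n : ℤ × ℤ, n ≠ 0 → (i.1 * n.2 - i.2 * n.1 : ℤ) ≠ 0 → b n = 0 := by
    intro n hn hd
    have hnn : n + n ≠ 0 := by
      intro h
      apply hn
      rw [Prod.ext_iff] at h ⊢
      simp only [Prod.fst_add, Prod.snd_add, Prod.fst_zero, Prod.snd_zero] at h ⊢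
      omega
    have H := h1 n n hn hn hnn
    have hc : ((n + i).1 * n.2 - (n + i).2 * n.1 : ℤ) = i.1 * n.2 - i.2 * n.1 := by
      simp only [Prod.fst_add, Prod.snd_add]; ring
    rw [hc] at H
    have hz : ((i.1 * n.2 - i.2 * n.1 : ℤ) : ℂ) * b n = 0 := by
      rw [← H]; push_cast; ring
    rcases mul_eq_zero.mp hz with h | h
    · exact absurd (by exact_mod_cast h) hd
    · exact h
  -- the auxiliary vector n₀ = (i₁, -i₂)
  set n₀ : ℤ × ℤ := (i.1, -i.2) with hn₀def
  have hn₀ : n₀ ≠ 0 := by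
    intro h
    exact hi1 (congrArg Prod.fst h)
  have hbn₀ : b n₀ = 0 := by
    apply key n₀ hn₀
    have : (i.1 * n₀.2 - i.2 * n₀.1 : ℤ) = -(2 * i.1 * i.2) := by
      simp [hn₀def]; ring
    rw [this]
    simp only [neg_ne_zero]
    exact mul_ne_zero (mul_ne_zero two_ne_zero hi1) hi2
  intro m hm
  by_cases hd : (i.1 * m.2 - i.2 * m.1 : ℤ) ≠ 0
  · exact key m hm hd
  push_neg at hd
  have hp : i.1 * m.2 = i.2 * m.1 := by omega
  by_cases hmi : m = -i
  · -- use h1 with m' = (-2 i₁, 0), n = n₀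
    set m' : ℤ × ℤ := (-2 * i.1, 0) with hm'def
    have hm' : m' ≠ 0 := by
      intro h
      have : -2 * i.1 = 0 := congrArg Prod.fst h
      omega
    have hsum : m' + n₀ = m := by
      rw [hmi]
      exact Prod.ext (by simp [hm'def, hn₀def]; ring) (by simp [hm'def, hn₀def])
    have hsumne : m' + n₀ ≠ 0 := by rw [hsum]; exact hm
    have H := h1 m' n₀ hm' hn₀ hsumne
    rw [hsum, hbn₀, mul_zero] at H
    have hz : ((2 * i.1 * i.2 : ℤ) : ℂ) * b m = 0 := by
      push_cast at H ⊢
      simp only [hn₀def, hm'def] at H; push_cast at H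
      linear_combination (-1/2 : ℂ) * H
    have hcne : ((2 * i.1 * i.2 : ℤ) : ℂ) ≠ 0 := by
      exact_mod_cast mul_ne_zero (mul_ne_zero two_ne_zero hi1) hi2
    exact (mul_eq_zero.mp hz).resolve_left hcne
  · -- use h2 with m, n₀
    have hsumne : m + n₀ ≠ 0 := by
      intro h
      have e1 : m.1 + i.1 = 0 := congrArg Prod.fst h
      have e2 : m.2 + -i.2 = 0 := congrArg Prod.snd h
      have : m.1 = -i.1 := by omega
      have : m.2 = i.2 := by omega
      -- then hp : i.1 * i.2 = i.2 * (-i.1), contradiction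
      rw [‹m.2 = i.2›, ‹m.1 = -i.1›] at hp
      have : 2 * i.1 * i.2 = 0 := by linarith
      rcases mul_eq_zero.mp this with h' | h'
      · rcases mul_eq_zero.mp h' with h'' | h''
        · norm_num at h''
        · exact hi1 h''
      · exact hi2 h'
    have H := h2 m n₀ hm hn₀ hsumne
    rw [hbn₀, mul_zero] at H
    have hc : (n₀.1 * (m + i).2 - n₀.2 * (m + i).1 : ℤ) = 2 * i.2 * (m.1 + i.1) := by
      simp only [hn₀def, Prod.fst_add, Prod.snd_add]
      nlinarith [hp]
    rw [hc] at H
    have hne : m.1 + i.1 ≠ 0 := by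
      intro h
      apply hmi
      have hm1 : m.1 = -i.1 := by omega
      have hm2 : m.2 = -i.2 := by
        have := hp
        rw [hm1] at this
        -- i.1 * m.2 = -i.2 * i.1
        have : i.1 * m.2 = i.1 * (-i.2) := by linarith
        exact mul_left_cancel₀ hi1 this
      exact Prod.ext (by simp [hm1]) (by simp [hm2])
    have hcne : ((2 * i.2 * (m.1 + i.1) : ℤ) : ℂ) ≠ 0 := by
      exact_mod_cast mul_ne_zero (mul_ne_zero two_ne_zero hi2) hne
    exact (mul_eq_zero.mp H.symm).resolve_left hcne
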